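/- arXiv:1610.09266 — 2 statements merged into one kernel-verified Lean document; each statement's English description precedes it below -/
import Mathlib

section
/- In the polynomial ring ℂ[θ_1,θ_2,θ_3,ω], let χ_1,…,χ_8 be the eight linear forms ±θ_1±θ_2±θ_3 (all sign combinations). Then σ_3(χ•) ω⁵ + σ_5(χ•) ω³ + σ_7(χ•) ω + σ_8(χ•) = σ_1(θ)² ( σ_1(θ)³ − 4 σ_2(θ) σ_1(θ) + 8 σ_3(θ) )²; equivalently (since the odd elementary symmetric polynomials of χ_1,…,χ_8 vanish), the product of all eight characters satisfies σ_8(χ•) = χ_1χ_2⋯χ_8 = σ_1²(σ_1³ − 4σ_1σ_2 + 8σ_3)². (This is the generator Q̃^S_{−,2} of the kernel ideal for the three-qubit case r = 3.) -/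
open MvPolynomial

/-- `θ_1` in `ℂ[θ_1,θ_2,θ_3,ω]`. -/
noncomputable def θ₁ : MvPolynomial (Fin 4) ℂ := X 0
/-- `θ_2` in `ℂ[θ_1,θ_2,θ_3,ω]`. -/
noncomputable def θ₂ : MvPolynomial (Fin 4) ℂ := X 1
/-- `θ_3` in `ℂ[θ_1,θ_2,θ_3,ω]`. -/
noncomputable def θ₃ : MvPolynomial (Fin 4) ℂ := X 2
/-- `ω` in `ℂ[θ_1,θ_2,θ_3,ω]`. -/
noncomputable def w : MvPolynomial (Fin 4) ℂ := X 3

/-- The multiset of the eight linear forms `±θ_1 ± θ_2 ± θ_3` (all sign combinations),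
the additive characters of the `T³`-action on `ℙ_7`. -/
noncomputable def χs : Multiset (MvPolynomial (Fin 4) ℂ) :=
  {θ₁ + θ₂ + θ₃, θ₁ + θ₂ - θ₃, θ₁ - θ₂ + θ₃, -θ₁ + θ₂ + θ₃,
   θ₁ - θ₂ - θ₃, -θ₁ + θ₂ - θ₃, -θ₁ - θ₂ + θ₃, -θ₁ - θ₂ - θ₃}

/-- `σ_1(θ) = θ_1 + θ_2 + θ_3`. -/
noncomputable def s₁ : MvPolynomial (Fin 4) ℂ := θ₁ + θ₂ + θ₃
/-- `σ_2(θ) = θ_1θ_2 + θ_1θ_3 + θ_2θ_3`. -/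
noncomputable def s₂ : MvPolynomial (Fin 4) ℂ := θ₁ * θ₂ + θ₁ * θ₃ + θ₂ * θ₃
/-- `σ_3(θ) = θ_1θ_2θ_3`. -/
noncomputable def s₃ : MvPolynomial (Fin 4) ℂ := θ₁ * θ₂ * θ₃

set_option maxHeartbeats 4000000

/-- Recursive computation of elementary symmetric functions of a list. -/
private noncomputable def E {R : Type*} [CommSemiring R] : List R → ℕ → R
  | _, 0 => 1
  | [], _+1 => 0
  | a :: l, n+1 => E l (n+1) + a * E l n

private lemma esymm_coe {R : Type*} [CommSemiring R] (l : List R) (n : ℕ) :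
    (l : Multiset R).esymm n = E l n := by
  induction l generalizing n with
  | nil =>
    cases n with
    | zero => simp [Multiset.esymm, E, Multiset.powersetCard_zero_left]
    | succ n => simp [Multiset.esymm, E, Multiset.powersetCard_zero_right]
  | cons a l ih =>
    cases n with
    | zero => simp [Multiset.esymm, E, Multiset.powersetCard_zero_left]
    | succ n =>
      have h : ((a :: l : List R) : Multiset R) = a ::ₘ (l : Multiset R) := rfl
      rw [h, Multiset.esymm, Multiset.powersetCard_cons, Multiset.map_add, Multiset.sum_add,
        Multiset.map_map]
      simp only [Function.comp, Multiset.prod_cons, E]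
      rw [← Multiset.esymm, ih, Multiset.sum_map_mul_left, ← Multiset.esymm, ih]

private lemma χs_coe : χs =
    (([θ₁ + θ₂ + θ₃, θ₁ + θ₂ - θ₃, θ₁ - θ₂ + θ₃, -θ₁ + θ₂ + θ₃,
       θ₁ - θ₂ - θ₃, -θ₁ + θ₂ - θ₃, -θ₁ - θ₂ + θ₃, -θ₁ - θ₂ - θ₃] :
      List (MvPolynomial (Fin 4) ℂ)) : Multiset (MvPolynomial (Fin 4) ℂ)) := rfl

/-- Three-qubit kernel generator `Q̃^S_{-,2}`:
`σ_3(χ•) ω⁵ + σ_5(χ•) ω³ + σ_7(χ•) ω + σ_8(χ•) = σ_1² (σ_1³ - 4 σ_2 σ_1 + 8 σ_3)²`;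
equivalently, the product of all eight characters is
`σ_8(χ•) = χ_1 ⋯ χ_8 = σ_1² (σ_1³ - 4 σ_1 σ_2 + 8 σ_3)²`. -/
theorem three_qubit_kernel_generator_minus_two :
    (χs.esymm 3 * w ^ 5 + χs.esymm 5 * w ^ 3 + χs.esymm 7 * w + χs.esymm 8 =
      s₁ ^ 2 * (s₁ ^ 3 - 4 * s₂ * s₁ + 8 * s₃) ^ 2) ∧
    χs.esymm 8 = s₁ ^ 2 * (s₁ ^ 3 - 4 * s₁ * s₂ + 8 * s₃) ^ 2 ∧
    χs.esymm 8 = χs.prod := by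
  rw [χs_coe, s₁, s₂, s₃, esymm_coe, esymm_coe, esymm_coe, esymm_coe, Multiset.prod_coe]
  refine ⟨?_, ?_, ?_⟩ <;>
    (simp only [E, List.prod_cons, List.prod_nil]; ring)
end

section
/- In the polynomial ring ℂ[θ_1,θ_2,θ_3,ω], let χ_1,…,χ_8 be the eight linear forms ±θ_1±θ_2±θ_3 (all sign combinations). Writing σ_i for the elementary symmetric polynomials σ_i(θ_1,θ_2,θ_3), one has the identity σ_1(χ•) ω⁷ + σ_2(χ•) ω⁶ + σ_4(χ•) ω⁴ + σ_6(χ•) ω² = 2ω² ( 3σ_1⁴(4σ_2+ω²) + 8σ_3σ_1(4σ_2+ω²) − 2σ_1²(6σ_2ω² + 8σ_2² + ω⁴) + 4(σ_2ω⁴ + 2σ_2²ω² − 8σ_3²) − 2σ_1⁶ − 16σ_3σ_1³ ). (This is the generator Q̃^S_{+,2} of the kernel ideal for the three-qubit case r = 3.) -/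
open MvPolynomial

lemma pc1 {α : Type*} (a : α) : Multiset.powersetCard 1 {a} = {({a} : Multiset α)} := by
  simp [Multiset.powersetCard_one]

lemma pc2 {α : Type*} (a : α) : Multiset.powersetCard 2 ({a} : Multiset α) = 0 :=
  Multiset.powersetCard_eq_empty _ (by simp)
lemma pc3 {α : Type*} (a : α) : Multiset.powersetCard 3 ({a} : Multiset α) = 0 :=
  Multiset.powersetCard_eq_empty _ (by simp)
lemma pc4 {α : Type*} (a : α) : Multiset.powersetCard 4 ({a} : Multiset α) = 0 :=
  Multiset.powersetCard_eq_empty _ (by simp)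
lemma pc5 {α : Type*} (a : α) : Multiset.powersetCard 5 ({a} : Multiset α) = 0 :=
  Multiset.powersetCard_eq_empty _ (by simp)
lemma pc6 {α : Type*} (a : α) : Multiset.powersetCard 6 ({a} : Multiset α) = 0 :=
  Multiset.powersetCard_eq_empty _ (by simp)

set_option maxHeartbeats 1000000 in
lemma chis_esymm_one : χs.esymm 1 = 0 := by
  simp only [χs, Multiset.insert_eq_cons, Multiset.esymm,
    Multiset.powersetCard_cons, Multiset.powersetCard_zero_left,
    Multiset.powersetCard_zero_right, pc1, pc2, pc3, pc4, pc5, pc6,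
    Multiset.map_cons, Multiset.map_add, Multiset.map_map, Multiset.map_singleton,
    Multiset.map_zero, Multiset.sum_cons, Multiset.sum_add, Multiset.sum_zero,
    Multiset.sum_singleton, Multiset.prod_cons, Multiset.prod_singleton,
    Multiset.prod_zero, Multiset.cons_zero, Nat.reduceAdd, zero_add, Function.comp]
  ring

set_option maxHeartbeats 1000000 in
lemma chis_esymm_two : χs.esymm 2 = -4 * (θ₁^2 + θ₂^2 + θ₃^2) := by
  simp only [χs, Multiset.insert_eq_cons, Multiset.esymm,
    Multiset.powersetCard_cons, Multiset.powersetCard_zero_left,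
    Multiset.powersetCard_zero_right, pc1, pc2, pc3, pc4, pc5, pc6,
    Multiset.map_cons, Multiset.map_add, Multiset.map_map, Multiset.map_singleton,
    Multiset.map_zero, Multiset.sum_cons, Multiset.sum_add, Multiset.sum_zero,
    Multiset.sum_singleton, Multiset.prod_cons, Multiset.prod_singleton,
    Multiset.prod_zero, Multiset.cons_zero, Nat.reduceAdd, zero_add, Function.comp]
  ring

set_option maxHeartbeats 4000000 in
lemma chis_esymm_four : χs.esymm 4 =
    6 * (θ₁^4 + θ₂^4 + θ₃^4) + 4 * (θ₁^2*θ₂^2 + θ₁^2*θ₃^2 + θ₂^2*θ₃^2) := by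
  simp only [χs, Multiset.insert_eq_cons, Multiset.esymm,
    Multiset.powersetCard_cons, Multiset.powersetCard_zero_left,
    Multiset.powersetCard_zero_right, pc1, pc2, pc3, pc4, pc5, pc6,
    Multiset.map_cons, Multiset.map_add, Multiset.map_map, Multiset.map_singleton,
    Multiset.map_zero, Multiset.sum_cons, Multiset.sum_add, Multiset.sum_zero,
    Multiset.sum_singleton, Multiset.prod_cons, Multiset.prod_singleton,
    Multiset.prod_zero, Multiset.cons_zero, Nat.reduceAdd, zero_add, Function.comp]
  ring

set_option maxHeartbeats 16000000 in
lemma chis_esymm_six : χs.esymm 6 =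
    -4 * (θ₁^6 + θ₂^6 + θ₃^6)
      + 4 * (θ₁^4*θ₂^2 + θ₁^4*θ₃^2 + θ₂^4*θ₁^2 + θ₂^4*θ₃^2 + θ₃^4*θ₁^2 + θ₃^4*θ₂^2)
      - 40 * (θ₁^2*θ₂^2*θ₃^2) := by
  simp only [χs, Multiset.insert_eq_cons, Multiset.esymm,
    Multiset.powersetCard_cons, Multiset.powersetCard_zero_left,
    Multiset.powersetCard_zero_right, pc1, pc2, pc3, pc4, pc5, pc6,
    Multiset.map_cons, Multiset.map_add, Multiset.map_map, Multiset.map_singleton,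
    Multiset.map_zero, Multiset.sum_cons, Multiset.sum_add, Multiset.sum_zero,
    Multiset.sum_singleton, Multiset.prod_cons, Multiset.prod_singleton,
    Multiset.prod_zero, Multiset.cons_zero, Nat.reduceAdd, zero_add, Function.comp]
  ring

set_option maxHeartbeats 2000000 in
/-- Three-qubit kernel generator `Q̃^S_{+,2}`:
`σ_1(χ•) ω⁷ + σ_2(χ•) ω⁶ + σ_4(χ•) ω⁴ + σ_6(χ•) ω²
  = 2ω² (3σ_1⁴(4σ_2+ω²) + 8σ_3σ_1(4σ_2+ω²) - 2σ_1²(6σ_2ω² + 8σ_2² + ω⁴)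
    + 4(σ_2ω⁴ + 2σ_2²ω² - 8σ_3²) - 2σ_1⁶ - 16σ_3σ_1³)`. -/
theorem three_qubit_kernel_generator_plus_two :
    χs.esymm 1 * w ^ 7 + χs.esymm 2 * w ^ 6 + χs.esymm 4 * w ^ 4 + χs.esymm 6 * w ^ 2 =
      2 * w ^ 2 *
        (3 * s₁ ^ 4 * (4 * s₂ + w ^ 2) + 8 * s₃ * s₁ * (4 * s₂ + w ^ 2) -
          2 * s₁ ^ 2 * (6 * s₂ * w ^ 2 + 8 * s₂ ^ 2 + w ^ 4) +
          4 * (s₂ * w ^ 4 + 2 * s₂ ^ 2 * w ^ 2 - 8 * s₃ ^ 2) -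
          2 * s₁ ^ 6 - 16 * s₃ * s₁ ^ 3) := by
  rw [chis_esymm_one, chis_esymm_two, chis_esymm_four, chis_esymm_six]
  simp only [s₁, s₂, s₃]
  ring
end
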